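/- Let z > 0 and let f_z be the solution of the Stein equation, f_z(x) = √(2π) e^{x²/2} Φ(x) (1 - Φ(z)) for x ≤ z and f_z(x) = √(2π) e^{x²/2} (1 - Φ(x)) Φ(z) for x > z. Then for every x with |x| ≤ z/2 we have 0 < f_z(x) ≤ (√(2π)/2) e^{-z²/4}. -/
import Mathlib


open MeasureTheory Real

noncomputable def stdPhi (x : ℝ) : ℝ :=
  (Real.sqrt (2 * Real.pi))⁻¹ * ∫ u in Set.Iic x, Real.exp (-u ^ 2 / 2)

noncomputable def steinF (z x : ℝ) : ℝ :=
  if x ≤ z then Real.sqrt (2 * Real.pi) * Real.exp (x ^ 2 / 2) * stdPhi x * (1 - stdPhi z)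
  else Real.sqrt (2 * Real.pi) * Real.exp (x ^ 2 / 2) * (1 - stdPhi x) * stdPhi z

lemma gauss_integrable : Integrable (fun u : ℝ => Real.exp (-u ^ 2 / 2)) := by
  have := integrable_exp_neg_mul_sq (b := (1/2 : ℝ)) (by norm_num)
  convert this using 2 with u; ring_nf

lemma gauss_total : ∫ u : ℝ, Real.exp (-u ^ 2 / 2) = Real.sqrt (2 * Real.pi) := by
  have := integral_gaussian (1/2 : ℝ)
  rw [show (π / (1/2 : ℝ)) = 2 * π by ring] at this
  rw [← this]; congr 1 with u; ring_nf

lemma gauss_Ioi_zero : ∫ u in Set.Ioi (0:ℝ), Real.exp (-u ^ 2 / 2)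
    = Real.sqrt (2 * Real.pi) / 2 := by
  have := integral_gaussian_Ioi (1/2 : ℝ)
  rw [show (π / (1/2 : ℝ)) = 2 * π by ring] at this
  rw [← this]; congr 1 with u; ring_nf

lemma gauss_Iic_pos (x : ℝ) : 0 < ∫ u in Set.Iic x, Real.exp (-u ^ 2 / 2) := by
  rw [setIntegral_pos_iff_support_of_nonneg_ae
    (Filter.Eventually.of_forall fun u => (Real.exp_pos _).le)
    gauss_integrable.integrableOn]
  have : Function.support (fun u : ℝ => Real.exp (-u ^ 2 / 2)) = Set.univ := by
    ext u; simp [Function.support, (Real.exp_pos _).ne']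
  rw [this, Set.univ_inter]
  simp [Real.volume_Iic]

lemma gauss_Iic_le (x : ℝ) : ∫ u in Set.Iic x, Real.exp (-u ^ 2 / 2)
    ≤ Real.sqrt (2 * Real.pi) := by
  rw [← gauss_total]
  exact setIntegral_le_integral gauss_integrable
    (Filter.Eventually.of_forall fun u => (Real.exp_pos _).le)

lemma gauss_split (z : ℝ) : (∫ u in Set.Iic z, Real.exp (-u ^ 2 / 2))
    + ∫ u in Set.Ioi z, Real.exp (-u ^ 2 / 2) = Real.sqrt (2 * Real.pi) := by
  rw [← gauss_total]
  exact intervalIntegral.integral_Iic_add_Ioi gauss_integrable.integrableOn gauss_integrable.integrableOn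

lemma gauss_Ioi_pos (z : ℝ) : 0 < ∫ u in Set.Ioi z, Real.exp (-u ^ 2 / 2) := by
  rw [setIntegral_pos_iff_support_of_nonneg_ae
    (Filter.Eventually.of_forall fun u => (Real.exp_pos _).le)
    gauss_integrable.integrableOn]
  have : Function.support (fun u : ℝ => Real.exp (-u ^ 2 / 2)) = Set.univ := by
    ext u; simp [Function.support, (Real.exp_pos _).ne']
  rw [this, Set.univ_inter]
  simp [Real.volume_Ioi]

lemma gauss_tail (z : ℝ) (hz : 0 ≤ z) :
    ∫ u in Set.Ioi z, Real.exp (-u ^ 2 / 2)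
      ≤ Real.exp (-z ^ 2 / 2) * (Real.sqrt (2 * Real.pi) / 2) := by
  have hshift : ∫ t in Set.Ioi (0:ℝ), Real.exp (-(t+z) ^ 2 / 2)
      = ∫ u in Set.Ioi z, Real.exp (-u ^ 2 / 2) := by
    have h := (measurePreserving_add_right (volume : Measure ℝ) z).setIntegral_preimage_emb
      (measurableEmbedding_addRight z) (fun u => Real.exp (-u ^ 2 / 2)) (Set.Ioi z)
    simpa using h
  rw [← hshift]
  have hint1 : IntegrableOn (fun t : ℝ => Real.exp (-(t+z) ^ 2 / 2)) (Set.Ioi 0) := by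
    exact (gauss_integrable.comp_add_right z).integrableOn
  have hint2 : IntegrableOn
      (fun t : ℝ => Real.exp (-z ^ 2 / 2) * Real.exp (-t ^ 2 / 2)) (Set.Ioi 0) :=
    (gauss_integrable.const_mul _).integrableOn
  calc ∫ t in Set.Ioi (0:ℝ), Real.exp (-(t+z) ^ 2 / 2)
      ≤ ∫ t in Set.Ioi (0:ℝ), Real.exp (-z ^ 2 / 2) * Real.exp (-t ^ 2 / 2) := by
        apply setIntegral_mono_on hint1 hint2 measurableSet_Ioi
        intro t ht
        rw [← Real.exp_add, Real.exp_le_exp]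
        have ht' : 0 < t := ht
        nlinarith
    _ = Real.exp (-z ^ 2 / 2) * (Real.sqrt (2 * Real.pi) / 2) := by
        rw [integral_const_mul, gauss_Ioi_zero]

theorem steinF_bound_center (z x : ℝ) (hz : 0 < z) (hx : |x| ≤ z / 2) :
    0 < steinF z x ∧ steinF z x ≤ (Real.sqrt (2 * Real.pi) / 2) * Real.exp (-z ^ 2 / 4) := by
  have hs : 0 < Real.sqrt (2 * Real.pi) := Real.sqrt_pos.2 (by positivity)
  have hxz : x ≤ z := by
    have := abs_le.1 hx
    linarith
  have hdef : steinF z x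
      = Real.sqrt (2 * Real.pi) * Real.exp (x ^ 2 / 2) * stdPhi x * (1 - stdPhi z) := by
    rw [steinF, if_pos hxz]
  have hPhi_pos : 0 < stdPhi x := mul_pos (inv_pos.2 hs) (gauss_Iic_pos x)
  have hPhi_le : stdPhi x ≤ 1 := by
    rw [stdPhi, inv_mul_le_iff₀ hs, mul_one]
    exact gauss_Iic_le x
  have hone : 1 - stdPhi z
      = (Real.sqrt (2 * Real.pi))⁻¹ * ∫ u in Set.Ioi z, Real.exp (-u ^ 2 / 2) := by
    rw [stdPhi]
    have h2 : (Real.sqrt (2 * Real.pi))⁻¹ * (∫ u in Set.Iic z, Real.exp (-u ^ 2 / 2))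
        + (Real.sqrt (2 * Real.pi))⁻¹ * (∫ u in Set.Ioi z, Real.exp (-u ^ 2 / 2)) = 1 := by
      rw [← mul_add, gauss_split z]
      exact inv_mul_cancel₀ hs.ne'
    linarith
  have htail_pos : 0 < 1 - stdPhi z := by
    rw [hone]; exact mul_pos (inv_pos.2 hs) (gauss_Ioi_pos z)
  have htail_le : 1 - stdPhi z ≤ Real.exp (-z ^ 2 / 2) / 2 := by
    rw [hone, inv_mul_le_iff₀ hs]
    calc ∫ u in Set.Ioi z, Real.exp (-u ^ 2 / 2)
        ≤ Real.exp (-z ^ 2 / 2) * (Real.sqrt (2 * Real.pi) / 2) := gauss_tail z hz.le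
      _ = Real.sqrt (2 * Real.pi) * (Real.exp (-z ^ 2 / 2) / 2) := by ring
  constructor
  · rw [hdef]
    positivity
  · rw [hdef]
    have hx2 : x ^ 2 ≤ z ^ 2 / 4 := by
      have h1 := abs_le.1 hx
      nlinarith
    calc Real.sqrt (2 * Real.pi) * Real.exp (x ^ 2 / 2) * stdPhi x * (1 - stdPhi z)
        ≤ Real.sqrt (2 * Real.pi) * Real.exp (x ^ 2 / 2) * 1 * (Real.exp (-z ^ 2 / 2) / 2) := by
          apply mul_le_mul _ htail_le htail_pos.le (by positivity)
          apply mul_le_mul_of_nonneg_left hPhi_le (by positivity)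
      _ = (Real.sqrt (2 * Real.pi) / 2) * Real.exp (x ^ 2 / 2 + -z ^ 2 / 2) := by
          rw [Real.exp_add]; ring
      _ ≤ (Real.sqrt (2 * Real.pi) / 2) * Real.exp (-z ^ 2 / 4) := by
          apply mul_le_mul_of_nonneg_left _ (by positivity)
          rw [Real.exp_le_exp]
          nlinarith [sq_nonneg z]
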